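/- For each natural number n ≥ 3, let p_n = (1/2 + 1/n, 1/2 − 1/n) and q_n = (1/2, 1/2) be two-dimensional probability vectors, let D(p_n‖q_n) = (1/2 + 1/n)·ln((1/2 + 1/n)/(1/2)) + (1/2 − 1/n)·ln((1/2 − 1/n)/(1/2)) be the KL divergence, let C_n = (1/2 + 1/n)⁻¹ and note the total variational distance is Δ(p_n, q_n) = 1/n. Then the ratio D(p_n‖q_n) / (C_n · (1/n)²) tends to 1 as n → ∞; equivalently, the sequence n² · (1/2 + 1/n) · D(p_n‖q_n) converges to 1. -/

import Mathlib

/-- Log expansion: for `|u| ≤ 1/2`, `|log(1-u) + u + u²/2| ≤ 2|u|³`. -/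
lemma log_aux {u : ℝ} (hu : |u| ≤ 1/2) :
    |Real.log (1 - u) + u + u^2/2| ≤ 2 * |u|^3 := by
  have h := Real.abs_log_sub_add_sum_range_le (x := u) (by linarith [abs_nonneg u] : |u| < 1) 2
  have hs : (∑ i ∈ Finset.range 2, u ^ (i + 1) / (i + 1)) = u + u^2/2 := by
    simp [Finset.sum_range_succ]; ring
  rw [hs] at h
  have h2 : |u| ^ 3 / (1 - |u|) ≤ 2 * |u|^3 := by
    rw [div_le_iff₀ (by linarith)]
    nlinarith [pow_nonneg (abs_nonneg u) 3]
  calc |Real.log (1 - u) + u + u^2/2| = |u + u^2/2 + Real.log (1 - u)| := by ring_nf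
    _ ≤ |u| ^ 3 / (1 - |u|) := h
    _ ≤ 2 * |u|^3 := h2

lemma bound_aux {x u v : ℝ} (hx : 0 < x) (hx4 : x ≤ 1/4)
    (hb1 : u ≤ 16 * x^3) (hb2 : v ≤ 16 * x^3) (hu : 0 ≤ u) (hv : 0 ≤ v) :
    (1/2 + x) * ((1/2 + x) * u + (1/2 - x) * v) ≤ 18 * x^3 := by
  have h1 : (1/2 + x) * u ≤ 12 * x^3 := by nlinarith
  have h2 : (1/2 - x) * v ≤ 8 * x^3 := by nlinarith
  have hS : 0 ≤ (1/2 + x) * u + (1/2 - x) * v :=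
    add_nonneg (mul_nonneg (by linarith) hu) (mul_nonneg (by linarith) hv)
  have h3 := mul_le_mul (by linarith : (1/2 + x) ≤ 3/4)
    (by linarith : (1/2 + x) * u + (1/2 - x) * v ≤ 20 * x^3) hS (by norm_num)
  nlinarith [pow_pos hx 3]

theorem stmt6 :
    Filter.Tendsto
      (fun n : ℕ =>
        (n : ℝ) ^ 2 * (1 / 2 + 1 / n) *
          ((1 / 2 + 1 / (n : ℝ)) * Real.log ((1 / 2 + 1 / (n : ℝ)) / (1 / 2))
            + (1 / 2 - 1 / (n : ℝ)) * Real.log ((1 / 2 - 1 / (n : ℝ)) / (1 / 2))))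
      Filter.atTop (nhds 1) := by
  set a : ℕ → ℝ := fun n =>
        (n : ℝ) ^ 2 * (1 / 2 + 1 / n) *
          ((1 / 2 + 1 / (n : ℝ)) * Real.log ((1 / 2 + 1 / (n : ℝ)) / (1 / 2))
            + (1 / 2 - 1 / (n : ℝ)) * Real.log ((1 / 2 - 1 / (n : ℝ)) / (1 / 2))) with ha
  have key : ∀ n : ℕ, 4 ≤ n → |a n - 1| ≤ 20 / n := by
    intro n hn
    have hn0 : (0:ℝ) < n := by positivity
    set x : ℝ := 1 / (n : ℝ) with hxdef
    have hx : 0 < x := by positivity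
    have hx4 : x ≤ 1/4 := by
      rw [hxdef, div_le_iff₀ hn0]
      have : (4:ℝ) ≤ n := by exact_mod_cast hn
      linarith
    have hnx : (n : ℝ) * x = 1 := by
      rw [hxdef, mul_one_div_cancel hn0.ne']
    have hr1 : (1/2 + x) / (1/2 : ℝ) = 1 + 2*x := by ring
    have hr2 : (1/2 - x) / (1/2 : ℝ) = 1 - 2*x := by ring
    have habs1 : |(-(2*x) : ℝ)| ≤ 1/2 := by rw [abs_neg, abs_of_nonneg (by linarith)]; linarith
    have habs2 : |(2*x : ℝ)| ≤ 1/2 := by rw [abs_of_nonneg (by linarith)]; linarith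
    have hE1 := log_aux habs1
    have hE2 := log_aux habs2
    rw [abs_neg] at hE1
    rw [abs_of_nonneg (by linarith : (0:ℝ) ≤ 2*x)] at hE1 hE2
    have h1sub : (1 : ℝ) - -(2*x) = 1 + 2*x := by ring
    rw [h1sub] at hE1
    -- e1 = log(1+2x) - (2x - 2x²), e2 = log(1-2x) + 2x + 2x²
    set e1 : ℝ := Real.log (1 + 2*x) - (2*x - 2*x^2) with he1
    set e2 : ℝ := Real.log (1 - 2*x) + (2*x + 2*x^2) with he2
    have hb1 : |e1| ≤ 16 * x^3 := by
      have : e1 = Real.log (1 + 2*x) + -(2*x) + (-(2*x))^2/2 := by rw [he1]; ring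
      rw [this]
      calc |Real.log (1 + 2*x) + -(2*x) + (-(2*x))^2/2| ≤ 2 * (2*x)^3 := hE1
        _ = 16 * x^3 := by ring
    have hb2 : |e2| ≤ 16 * x^3 := by
      have : e2 = Real.log (1 - 2*x) + 2*x + (2*x)^2/2 := by rw [he2]; ring
      rw [this]
      calc |Real.log (1 - 2*x) + 2*x + (2*x)^2/2| ≤ 2 * (2*x)^3 := hE2
        _ = 16 * x^3 := by ring
    have hL1 : Real.log ((1/2 + x) / (1/2)) = (2*x - 2*x^2) + e1 := by rw [hr1, he1]; ring
    have hL2 : Real.log ((1/2 - x) / (1/2)) = -(2*x + 2*x^2) + e2 := by rw [hr2, he2]; ring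
    have han : a n = (n : ℝ)^2 * (1/2 + x) *
        ((1/2 + x) * ((2*x - 2*x^2) + e1) + (1/2 - x) * (-(2*x + 2*x^2) + e2)) := by
      rw [ha]; dsimp only; rw [← hxdef, hL1, hL2]
    have hn2x2 : (n : ℝ)^2 * x^2 = 1 := by rw [← mul_pow, hnx]; norm_num
    have hform : a n - 1 = 2*x + (n:ℝ)^2 * ((1/2 + x) * ((1/2 + x) * e1 + (1/2 - x) * e2)) := by
      rw [han]; linear_combination (1+2*x) * hn2x2
    have hRbound : |(1/2 + x) * ((1/2 + x) * e1 + (1/2 - x) * e2)| ≤ 18 * x^3 := by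
      have h12 : (0:ℝ) < 1/2 + x := by linarith
      have h12' : (0:ℝ) ≤ 1/2 - x := by linarith
      calc |(1/2 + x) * ((1/2 + x) * e1 + (1/2 - x) * e2)|
          = (1/2 + x) * |(1/2 + x) * e1 + (1/2 - x) * e2| := by
            rw [abs_mul, abs_of_pos h12]
        _ ≤ (1/2 + x) * ((1/2 + x) * |e1| + (1/2 - x) * |e2|) := by
            apply mul_le_mul_of_nonneg_left _ (le_of_lt h12)
            calc |(1/2 + x) * e1 + (1/2 - x) * e2|
                ≤ |(1/2 + x) * e1| + |(1/2 - x) * e2| := abs_add_le _ _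
              _ = (1/2 + x) * |e1| + (1/2 - x) * |e2| := by
                  rw [abs_mul, abs_mul, abs_of_pos h12, abs_of_nonneg h12']
        _ ≤ 18 * x^3 := bound_aux hx hx4 hb1 hb2 (abs_nonneg e1) (abs_nonneg e2)
    have : |a n - 1| ≤ 20 * x := by
      rw [hform]
      calc |2*x + (n:ℝ)^2 * ((1/2 + x) * ((1/2 + x) * e1 + (1/2 - x) * e2))|
          ≤ |2*x| + |(n:ℝ)^2 * ((1/2 + x) * ((1/2 + x) * e1 + (1/2 - x) * e2))| := abs_add_le _ _
        _ = 2*x + (n:ℝ)^2 * |(1/2 + x) * ((1/2 + x) * e1 + (1/2 - x) * e2)| := by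
            rw [abs_of_nonneg (by linarith : (0:ℝ) ≤ 2*x), abs_mul, abs_of_nonneg (by positivity : (0:ℝ) ≤ (n:ℝ)^2)]
        _ ≤ 2*x + (n:ℝ)^2 * (18 * x^3) := by
            have := mul_le_mul_of_nonneg_left hRbound (by positivity : (0:ℝ) ≤ (n:ℝ)^2)
            linarith
        _ = 2*x + 18 * ((n:ℝ)^2 * x^2) * x := by ring
        _ = 20*x := by rw [hn2x2]; ring
    calc |a n - 1| ≤ 20 * x := this
      _ = 20 / n := by rw [hxdef]; ring
  -- conclude via squeeze
  have h0 : Filter.Tendsto (fun n : ℕ => (20:ℝ) / n) Filter.atTop (nhds 0) := by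
    simpa using tendsto_const_nhds.div_atTop (tendsto_natCast_atTop_atTop (R := ℝ))
  have hsub : Filter.Tendsto (fun n : ℕ => a n - 1) Filter.atTop (nhds 0) :=
    squeeze_zero_norm' (Filter.eventually_atTop.2
      ⟨4, fun n hn => by simpa [Real.norm_eq_abs] using key n hn⟩) h0
  have := hsub.add (tendsto_const_nhds (x := (1:ℝ)))
  simpa using this
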